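/- Let p be a prime and R a commutative ring. Let X(t) = Σ_{n≥0} x_n t^n ∈ R[[t]] with x_0 = 1. Let U be the p-singular part of X, V the p-regular part of X, and Y(t) = V(t)·U(t)^{-1} = Σ_{n≥0} y_n t^n. Then for every n ≥ 1 one has the explicit formula y_n = Σ (−1)^k · x_{λ_0}·x_{λ_1}···x_{λ_k}, where the sum runs over all finite tuples (λ_0, λ_1, …, λ_k) (k ≥ 0) of positive integers with λ_0 + λ_1 + ⋯ + λ_k = n, p ∤ λ_0, and p ∣ λ_i for every 1 ≤ i ≤ k. -/

import Mathlib

open PowerSeries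

/-- The `p`-singular part of a power series `F = Σ fₙ tⁿ`, namely `Σ_{p ∣ n} fₙ tⁿ`. -/
noncomputable def pSingularPart {R : Type*} [CommRing R] (p : ℕ) (F : PowerSeries R) :
    PowerSeries R :=
  PowerSeries.mk fun n => if p ∣ n then PowerSeries.coeff (R := R) n F else 0

/-- The `p`-regular part of a power series `F = Σ fₙ tⁿ`, namely `Σ_{p ∤ n} fₙ tⁿ`. -/
noncomputable def pRegularPart {R : Type*} [CommRing R] (p : ℕ) (F : PowerSeries R) :
    PowerSeries R :=
  PowerSeries.mk fun n => if p ∣ n then 0 else PowerSeries.coeff (R := R) n F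

/-- `exp C = Σ_{k≥0} Cᵏ/k!` for a power series `C` with zero constant term over a
commutative `ℚ`-algebra.  (When the constant term of `C` is zero, `coeff n (C ^ k) = 0`
for `k > n`, so the truncated sum below computes the full exponential.) -/
noncomputable def psExp {R : Type*} [CommRing R] [Algebra ℚ R] (C : PowerSeries R) :
    PowerSeries R :=
  PowerSeries.mk fun n => ∑ k ∈ Finset.range (n + 1),
    ((k.factorial : ℚ)⁻¹) • PowerSeries.coeff (R := R) n (C ^ k)

section AuxLemmas

variable {R : Type*} [CommRing R]

lemma comp_blocks_ne_nil {n : ℕ} (hn : 1 ≤ n) (c : Composition n) :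
    c.blocks ≠ [] := by
  intro h
  have := c.blocks_sum
  rw [h] at this
  simp at this
  omega

/-- Append a block in front of a composition. -/
def consComp {n : ℕ} (j : ℕ) (hj : 1 ≤ j) (hjn : j ≤ n) (c : Composition (n - j)) :
    Composition n where
  blocks := j :: c.blocks
  blocks_pos := by
    intro i hi
    rcases List.mem_cons.1 hi with rfl | hi
    · omega
    · exact c.blocks_pos hi
  blocks_sum := by
    have := c.blocks_sum
    simp only [List.sum_cons, this]
    omega

/-- Remove the first block of a composition. -/
def tailComp {n : ℕ} (hn : 1 ≤ n) (c : Composition n) :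
    Composition (n - c.blocks.headI) where
  blocks := c.blocks.tail
  blocks_pos := fun hi => c.blocks_pos (List.mem_of_mem_tail hi)
  blocks_sum := by
    have hne := comp_blocks_ne_nil hn c
    have := c.blocks_sum
    cases h : c.blocks with
    | nil => exact absurd h hne
    | cons a t =>
      rw [h] at this
      simp only [h, List.sum_cons, List.headI_cons, List.tail_cons] at *
      omega

lemma comp_strip (n : ℕ) (hn : 1 ≤ n) (w : List ℕ → R) :
    ∑ c : Composition n, w c.blocks
      = ∑ j ∈ Finset.Icc 1 n, ∑ c : Composition (n - j), w (j :: c.blocks) := by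
  rw [Finset.sum_sigma']
  refine Finset.sum_bij' (i := fun c _ => (⟨c.blocks.headI, tailComp hn c⟩ :
      Σ j : ℕ, Composition (n - j)))
    (j := fun x hx => consComp x.1 (Finset.mem_Icc.1 (Finset.mem_sigma.1 hx).1).1
      (Finset.mem_Icc.1 (Finset.mem_sigma.1 hx).1).2 x.2) ?_ ?_ ?_ ?_ ?_
  · intro c _
    have hne := comp_blocks_ne_nil hn c
    refine Finset.mem_sigma.2 ⟨Finset.mem_Icc.2 ⟨?_, ?_⟩, Finset.mem_univ _⟩
    · show 1 ≤ c.blocks.headI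
      cases h : c.blocks with
      | nil => exact absurd h hne
      | cons a t =>
        have := c.blocks_pos (by rw [h]; exact List.mem_cons_self)
        simpa [h, Nat.one_le_iff_ne_zero, Nat.pos_iff_ne_zero] using this
    · calc c.blocks.headI ≤ c.blocks.sum := by
            cases h : c.blocks with
            | nil => exact absurd h hne
            | cons a t => simp [h]
          _ = n := c.blocks_sum
  · intro x hx
    exact Finset.mem_univ _
  · intro c hc
    apply Composition.ext
    simp only [consComp, tailComp]
    cases h : c.blocks with
    | nil => exact absurd h (comp_blocks_ne_nil hn c)
    | cons a t => simp [h]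
  · intro x hx
    rfl
  · intro c _
    have hne := comp_blocks_ne_nil hn c
    simp only [tailComp]
    cases h : c.blocks with
    | nil => exact absurd h hne
    | cons a t => simp [h]

lemma comp_zero_blocks (c : Composition 0) : c.blocks = [] := by
  have hs := c.blocks_sum
  cases h : c.blocks with
  | nil => rfl
  | cons a t =>
    have ha := c.blocks_pos (by rw [h]; exact List.mem_cons_self)
    rw [h, List.sum_cons] at hs
    omega

instance : Unique (Composition 0) where
  default := Composition.ones 0
  uniq c := Composition.ext (by rw [comp_zero_blocks]; rfl)

lemma Hcoeff (p : ℕ) (X : PowerSeries R) (m : ℕ) :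
    coeff (R := R) m (invOfUnit (pSingularPart p X) 1)
      = ∑ c ∈ Finset.univ.filter (fun c : Composition m => ∀ i ∈ c.blocks, p ∣ i),
          (-1 : R) ^ c.length * (c.blocks.map fun i => coeff (R := R) i X).prod := by
  induction m using Nat.strong_induction_on with
  | _ m IH =>
    rcases Nat.eq_zero_or_pos m with rfl | hm
    · rw [coeff_invOfUnit, if_pos rfl]
      rw [Finset.filter_true_of_mem (fun c _ => by simp [comp_zero_blocks c])]
      simp [Finset.univ_unique, Composition.length, comp_zero_blocks]
    · rw [coeff_invOfUnit, if_neg (by omega), Finset.Nat.sum_antidiagonal_eq_sum_range_succ_mk]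
      simp only [inv_one, Units.val_one]
      have hsub : Finset.Icc 1 m ⊆ Finset.range (m + 1) := by
        intro x hx; simp only [Finset.mem_Icc] at hx; simp only [Finset.mem_range]; omega
      rw [← Finset.sum_subset hsub (by
        intro x hx hx'
        simp only [Finset.mem_range] at hx
        simp only [Finset.mem_Icc] at hx'
        have : x = 0 := by omega
        subst this
        rw [if_neg (by omega)])]
      rw [Finset.sum_filter]
      have hstrip := comp_strip (R := R) m (by omega)
        (fun l => if (∀ i ∈ l, p ∣ i) then (-1 : R) ^ l.length * (l.map fun i => coeff (R := R) i X).prod else 0)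
      have hlen : ∀ (k : ℕ) (c : Composition k), c.length = c.blocks.length := fun _ _ => rfl
      simp only [hlen]
      rw [hstrip, Finset.mul_sum]
      apply Finset.sum_congr rfl
      intro j hj
      simp only [Finset.mem_Icc] at hj
      rw [if_pos (by omega)]
      have hIH := IH (m - j) (by omega)
      by_cases hpj : p ∣ j
      · have hcU : coeff (R := R) j (pSingularPart p X) = coeff (R := R) j X := by
          simp [pSingularPart, coeff_mk, hpj]
        rw [hcU, hIH, Finset.sum_filter, Finset.mul_sum, Finset.mul_sum]
        apply Finset.sum_congr rfl
        intro c _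
        simp only [List.forall_mem_cons, hpj, true_and, List.length_cons, List.map_cons,
          List.prod_cons, hlen]
        split_ifs with h
        · ring
        · ring
      · have hcU : coeff (R := R) j (pSingularPart p X) = 0 := by
          simp [pSingularPart, coeff_mk, hpj]
        rw [hcU]
        simp only [List.forall_mem_cons, hpj, false_and, if_false]
        simp

end AuxLemmas

/-- over any commutative ring, if `X = Σ xₙ tⁿ` has `x₀ = 1`,
`U`/`V` are its `p`-singular/`p`-regular parts and `Y = V·U⁻¹ = Σ yₙ tⁿ`, then for `n ≥ 1`,
`yₙ = Σ (-1)^k x_{λ₀} x_{λ₁} ⋯ x_{λ_k}`, the sum running over all tuples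
`(λ₀,…,λ_k)` of positive integers with `λ₀+⋯+λ_k = n`, `p ∤ λ₀` and `p ∣ λᵢ` for `i ≥ 1`.
(Such tuples are precisely the compositions of `n` whose first block is prime to `p` and
whose remaining blocks are divisible by `p`; here `k = length - 1`.) -/

theorem stmt3 (p : ℕ) (hp : p.Prime) (R : Type*) [CommRing R]
    (X Y : PowerSeries R)
    (hX0 : PowerSeries.constantCoeff (R := R) X = 1)
    (hY : Y * pSingularPart p X = pRegularPart p X) :
    ∀ n : ℕ, 1 ≤ n →
      PowerSeries.coeff (R := R) n Y =
        ∑ c ∈ Finset.univ.filter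
            (fun c : Composition n => ¬ p ∣ c.blocks.headI ∧ ∀ i ∈ c.blocks.tail, p ∣ i),
          (-1 : R) ^ (c.length - 1) * (c.blocks.map fun i => PowerSeries.coeff (R := R) i X).prod := by
  have hU0 : constantCoeff (R := R) (pSingularPart p X) = 1 := by
    simp only [pSingularPart, constantCoeff_mk, dvd_zero, if_true,
      coeff_zero_eq_constantCoeff_apply, hX0]
  have hUH : pSingularPart p X * invOfUnit (pSingularPart p X) 1 = 1 :=
    mul_invOfUnit _ 1 (by rw [hU0, Units.val_one])
  have hYVH : Y = pRegularPart p X * invOfUnit (pSingularPart p X) 1 := by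
    have h2 : Y * (pSingularPart p X * invOfUnit (pSingularPart p X) 1)
        = pRegularPart p X * invOfUnit (pSingularPart p X) 1 := by
      rw [← mul_assoc, hY]
    rwa [hUH, mul_one] at h2
  intro n hn
  rw [hYVH, coeff_mul, Finset.Nat.sum_antidiagonal_eq_sum_range_succ_mk]
  have hsub : Finset.Icc 1 n ⊆ Finset.range (n + 1) := by
    intro x hx; simp only [Finset.mem_Icc] at hx; simp only [Finset.mem_range]; omega
  rw [← Finset.sum_subset hsub (by
    intro x hx hx'
    simp only [Finset.mem_range] at hx
    simp only [Finset.mem_Icc] at hx'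
    have : x = 0 := by omega
    subst this
    simp [pRegularPart, coeff_mk])]
  rw [Finset.sum_filter]
  have hlen : ∀ (k : ℕ) (c : Composition k), c.length = c.blocks.length := fun _ _ => rfl
  simp only [hlen]
  have hstrip := comp_strip (R := R) n (by omega)
    (fun l => if (¬ p ∣ l.headI ∧ ∀ i ∈ l.tail, p ∣ i) then
      (-1 : R) ^ (l.length - 1) * (l.map fun i => PowerSeries.coeff (R := R) i X).prod else 0)
  rw [hstrip]
  apply Finset.sum_congr rfl
  intro j hj
  simp only [Finset.mem_Icc] at hj
  by_cases hpj : p ∣ j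
  · have hcV : coeff (R := R) j (pRegularPart p X) = 0 := by simp [pRegularPart, coeff_mk, hpj]
    rw [hcV, zero_mul]
    symm
    apply Finset.sum_eq_zero
    intro c _
    rw [if_neg (by simp [hpj])]
  · have hcV : coeff (R := R) j (pRegularPart p X) = coeff (R := R) j X := by
      simp [pRegularPart, coeff_mk, hpj]
    rw [hcV, Hcoeff p X (n - j), Finset.sum_filter, Finset.mul_sum]
    apply Finset.sum_congr rfl
    intro c _
    simp only [List.headI_cons, List.tail_cons, hpj, not_false_iff, true_and, List.length_cons,
      Nat.add_sub_cancel, List.map_cons, List.prod_cons, hlen]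
    split_ifs with h
    · ring
    · ring
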